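/- arXiv:2005.00853 — 4 statements merged into one kernel-verified Lean document; each statement's English description precedes it below -/
import Mathlib

section
/- For all real $B \ge 2$: $\frac{1}{2} + \frac{1}{2B} \le B^{-1/(B^2-1)}$. -/
/-- For all real `B ≥ 2`: `1/2 + 1/(2B) ≤ B^{-1/(B²-1)}`. -/
theorem stmt_10 (B : ℝ) (hB : 2 ≤ B) :
    1 / 2 + 1 / (2 * B) ≤ B ^ (-(1 / (B ^ 2 - 1))) := by
  have hB0 : (0:ℝ) < B := by linarith
  have hp : (0:ℝ) < B ^ 2 - 1 := by nlinarith
  set p : ℝ := B ^ 2 - 1 with hpdef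
  set q : ℝ := 2 * B / (B + 1) with hqdef
  have hq0 : (0:ℝ) < q := by positivity
  -- lower bound on log q
  have hlog : (B - 1) / (2 * B) ≤ Real.log q := by
    have h := Real.one_sub_inv_le_log_of_pos hq0
    have hqinv : q⁻¹ = (B + 1) / (2 * B) := by
      rw [hqdef]; rw [inv_div]
    rw [hqinv] at h
    have heq : 1 - (B + 1) / (2 * B) = (B - 1) / (2 * B) := by
      field_simp; ring
    linarith [heq ▸ h]
  -- key: B ≤ q ^ p
  have hkey : B ≤ q ^ p := by
    rw [Real.rpow_def_of_pos hq0]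
    have h1 : p * ((B - 1) / (2 * B)) ≤ Real.log q * p := by
      calc p * ((B - 1) / (2 * B)) ≤ p * Real.log q :=
            mul_le_mul_of_nonneg_left hlog hp.le
        _ = Real.log q * p := mul_comm _ _
    have h2 : Real.exp (p * ((B - 1) / (2 * B))) ≤ Real.exp (Real.log q * p) :=
      Real.exp_le_exp.2 h1
    refine le_trans ?_ h2
    set t : ℝ := p * ((B - 1) / (2 * B)) with htdef
    have ht0 : 0 ≤ t := by
      exact mul_nonneg hp.le (div_nonneg (by linarith) (by positivity))
    have hquad := Real.quadratic_le_exp_of_nonneg ht0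
    refine le_trans ?_ hquad
    have ht' : t * (2 * B) = (B ^ 2 - 1) * (B - 1) := by
      rw [htdef, hpdef]; field_simp
    have ht2 : (t * (2 * B)) ^ 2 = ((B ^ 2 - 1) * (B - 1)) ^ 2 := by rw [ht']
    have hmain : B * (4 * B ^ 2 * 2) ≤ (1 + t + t ^ 2 / 2) * (4 * B ^ 2 * 2) := by
      nlinarith [ht', ht2, sq_nonneg (B - 2), sq_nonneg (B * (B - 2)),
        sq_nonneg (B ^ 2 * (B - 2)), sq_nonneg ((B - 2) * (B - 1)), hB0]
    exact le_of_mul_le_mul_right hmain (by positivity : (0:ℝ) < 4 * B ^ 2 * 2)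
  -- deduce the result
  have hq1 : 1 / 2 + 1 / (2 * B) = q⁻¹ := by
    rw [hqdef, inv_div]; field_simp
  rw [hq1]
  have h5 : B ^ ((1:ℝ) / p) ≤ q := by
    have h := Real.rpow_le_rpow hB0.le hkey (by positivity : (0:ℝ) ≤ 1 / p)
    rwa [← Real.rpow_mul hq0.le, mul_one_div, div_self hp.ne', Real.rpow_one] at h
  calc q⁻¹ ≤ (B ^ ((1:ℝ) / p))⁻¹ := by
        apply inv_anti₀ (by positivity) h5
    _ = B ^ (-(1 / p)) := by rw [Real.rpow_neg hB0.le]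
end

section
/- Let $\alpha \ge 1$, $\gamma \in (0,1)$, and suppose $\sum_{i=1}^m q_i \exp(-p_i n) \le (1-\gamma)/\alpha$ where $q_i \ge 0$, $\sum_i q_i = 1$, $p_i \in [0, 1/2]$. Set $\varepsilon = 1 - \frac{\ln((1-\gamma/2)/\alpha)}{\ln((1-\gamma)/\alpha)}$ and $B = 2/\varepsilon$. Then $B > 2$ and $\sum_{i=1}^m q_i \exp(-p_i n (1 - 2/B)) \le (1 - \gamma/2)/\alpha$. -/
/-- Lemma 6 of the paper: if `∑ qᵢ exp(-pᵢn) ≤ (1-γ)/α`, then with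
`ε = 1 - ln((1-γ/2)/α)/ln((1-γ)/α)` and `B = 2/ε` we have `B > 2` and
`∑ qᵢ exp(-pᵢ n (1 - 2/B)) ≤ (1-γ/2)/α`. -/
theorem stmt_16 (m : ℕ) (q p : Fin m → ℝ) (n : ℕ)
    (hq0 : ∀ i, 0 ≤ q i) (hqsum : ∑ i, q i = 1)
    (hp0 : ∀ i, 0 ≤ p i) (hp1 : ∀ i, p i ≤ 1 / 2)
    (α : ℝ) (hα : 1 ≤ α) (γ : ℝ) (hγ0 : 0 < γ) (hγ1 : γ < 1)
    (hsum : ∑ i, q i * Real.exp (-(p i) * n) ≤ (1 - γ) / α)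
    (ε B : ℝ)
    (hε : ε = 1 - Real.log ((1 - γ / 2) / α) / Real.log ((1 - γ) / α))
    (hB : B = 2 / ε) :
    2 < B ∧ ∑ i, q i * Real.exp (-(p i) * n * (1 - 2 / B)) ≤ (1 - γ / 2) / α := by
  have hα0 : (0 : ℝ) < α := by linarith
  set a := (1 - γ) / α with ha_def
  set b := (1 - γ / 2) / α with hb_def
  have ha0 : 0 < a := div_pos (by linarith) hα0
  have hb0 : 0 < b := div_pos (by linarith) hα0
  have hab : a < b := by
    rw [ha_def, hb_def, div_lt_div_iff₀ hα0 hα0]; nlinarith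
  have hb1 : b < 1 := by
    rw [hb_def, div_lt_one hα0]; linarith
  have ha1 : a < 1 := lt_trans hab hb1
  have hla : Real.log a < 0 := Real.log_neg ha0 ha1
  have hlb : Real.log b < 0 := Real.log_neg hb0 hb1
  have hlab : Real.log a < Real.log b := Real.log_lt_log ha0 hab
  have hratio0 : 0 < Real.log b / Real.log a := div_pos_of_neg_of_neg hlb hla
  have hratio1 : Real.log b / Real.log a < 1 := by
    rw [div_lt_one_iff]
    exact Or.inr (Or.inr ⟨hla, hlab⟩)
  have hε0 : 0 < ε := by rw [hε]; linarith
  have hε1 : ε < 1 := by rw [hε]; linarith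
  have hBgt : 2 < B := by
    rw [hB]
    rw [lt_div_iff₀ hε0]; linarith
  refine ⟨hBgt, ?_⟩
  have h2B : 1 - 2 / B = 1 - ε := by
    rw [hB]; field_simp
  rw [h2B]
  -- key identity: a ^ (1 - ε) = b
  have hkey : a ^ (1 - ε) = b := by
    have : (1 - ε) * Real.log a = Real.log b := by
      rw [hε]; field_simp
      rw [sub_sub_cancel]; field_simp [ne_of_lt hla]
    rw [Real.rpow_def_of_pos ha0, mul_comm, this, Real.exp_log hb0]
  have h1ε0 : (0:ℝ) ≤ 1 - ε := by linarith
  have hconc := Real.concaveOn_rpow h1ε0 (by linarith)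
  have hjensen := hconc.le_map_sum (t := Finset.univ) (w := q)
    (p := fun i => Real.exp (-(p i) * n)) (fun i _ => hq0 i) hqsum
    (fun i _ => Set.mem_Ici.mpr (Real.exp_pos _).le)
  simp only [smul_eq_mul] at hjensen
  calc ∑ i, q i * Real.exp (-(p i) * n * (1 - ε))
      = ∑ i, q i * Real.exp (-(p i) * n) ^ (1 - ε) := by
        refine Finset.sum_congr rfl fun i _ => ?_
        rw [Real.exp_mul]
    _ ≤ (∑ i, q i * Real.exp (-(p i) * n)) ^ (1 - ε) := hjensen
    _ ≤ a ^ (1 - ε) := by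
        apply Real.rpow_le_rpow ?_ hsum h1ε0
        exact Finset.sum_nonneg fun i _ => mul_nonneg (hq0 i) (Real.exp_pos _).le
    _ = b := hkey
end

section
/- Let $x^*, x, y \in \{0,1\}^n$ with Hamming distances satisfying $H(x, x^*) \ge H(y, x^*)$, and let $p \le 1/2$. Let $x'$ (resp. $y'$) be obtained from $x$ (resp. $y$) by flipping each bit independently with probability $p$. Then $H(y', x^*)$ is stochastically dominated by $H(x', x^*)$. -/
open MeasureTheory ENNReal

section WittAuxSec
open Finset

namespace WittAux

variable {n : ℕ}

lemma ham_eq (u v : Fin n → Bool) :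
    hammingDist u v = #(univ.filter fun i => u i ≠ v i) := rfl

lemma ham_split (u v : Fin n → Bool) (i₀ : Fin n) :
    hammingDist u v
      = #((univ.erase i₀).filter fun i => u i ≠ v i)
        + (if u i₀ = v i₀ then 0 else 1) := by
  rw [ham_eq]
  conv_lhs => rw [← Finset.insert_erase (Finset.mem_univ i₀), Finset.filter_insert]
  by_cases h : u i₀ = v i₀
  · simp [h]
  · rw [if_pos h, if_neg h, Finset.card_insert_of_notMem (by simp)]

end WittAux

namespace WittAux

noncomputable def w (p : ℝ≥0∞) (b : Bool) : ℝ≥0∞ := bif b then p else 1 - p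

noncomputable def S (p : ℝ≥0∞) (lam : ℝ) (a : Fin n → Bool) : ℝ≥0∞ :=
  ∑ ω : Fin n → Bool, if (hammingDist ω a : ℝ) ≤ lam then ∏ i, w p (ω i) else 0

lemma sum_split (i₀ : Fin n) (g : (Fin n → Bool) → ℝ≥0∞) :
    ∑ ω : Fin n → Bool, g ω
      = ∑ ω ∈ univ.filter (fun ω : Fin n → Bool => ω i₀ = true),
          (g ω + g (Function.update ω i₀ false)) := by
  rw [Finset.sum_add_distrib,
    ← Finset.sum_filter_add_sum_filter_not univ (fun ω : Fin n → Bool => ω i₀ = true) g]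
  congr 1
  refine Finset.sum_nbij' (fun ω => Function.update ω i₀ true)
    (fun ω => Function.update ω i₀ false) ?_ ?_ ?_ ?_ ?_
  · intro ω hω; simp at hω ⊢
  · intro ω hω; simp at hω ⊢
  · intro ω hω; simp at hω
    funext i
    rcases eq_or_ne i i₀ with rfl | h
    · simp [hω]
    · simp [Function.update_of_ne h]
  · intro ω hω; simp at hω
    funext i
    rcases eq_or_ne i i₀ with rfl | h
    · simp [hω]
    · simp [Function.update_of_ne h]
  · intro ω hω; simp at hω
    congr 1
    funext i
    rcases eq_or_ne i i₀ with rfl | h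
    · simp [hω]
    · simp [Function.update_of_ne h]

lemma step (p : ℝ≥0∞) (hp : p ≤ 1 - p) (lam : ℝ) (a : Fin n → Bool) (i₀ : Fin n)
    (ha : a i₀ = true) :
    S p lam a ≤ S p lam (Function.update a i₀ false) := by
  unfold S
  rw [sum_split i₀, sum_split i₀]
  apply Finset.sum_le_sum
  intro ω hω
  have hωi : ω i₀ = true := (Finset.mem_filter.mp hω).2
  set a' := Function.update a i₀ false with ha'
  set m := #((univ.erase i₀).filter fun i => ω i ≠ a i) with hm
  set R := ∏ i ∈ univ.erase i₀, w p (ω i) with hR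
  have filt : ∀ (u v : Fin n → Bool), (∀ i, i ≠ i₀ → u i = ω i) → (∀ i, i ≠ i₀ → v i = a i) →
      #((univ.erase i₀).filter fun i => u i ≠ v i) = m := by
    intro u v hu hv
    rw [hm]
    apply congrArg
    apply Finset.filter_congr
    intro i hi
    rw [hu i (Finset.ne_of_mem_erase hi), hv i (Finset.ne_of_mem_erase hi)]
  have e1 : hammingDist ω a = m := by
    rw [ham_split ω a i₀, if_pos (by rw [hωi, ha]), filt ω a (fun _ _ => rfl) (fun _ _ => rfl), add_zero]
  have e2 : hammingDist (Function.update ω i₀ false) a = m + 1 := by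
    rw [ham_split _ a i₀,
      filt _ a (fun i h => Function.update_of_ne h _ _) (fun _ _ => rfl),
      if_neg (by simp [ha])]
  have e3 : hammingDist ω a' = m + 1 := by
    rw [ham_split _ _ i₀,
      filt ω a' (fun _ _ => rfl) (fun i h => Function.update_of_ne h _ _),
      if_neg (by simp [ha', hωi])]
  have e4 : hammingDist (Function.update ω i₀ false) a' = m := by
    rw [ham_split _ _ i₀,
      filt _ a' (fun i h => Function.update_of_ne h _ _) (fun i h => Function.update_of_ne h _ _),
      if_pos (by simp [ha']), add_zero]
  have P : ∀ c : Bool, ∏ i, w p (Function.update ω i₀ c i) = w p c * R := by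
    intro c
    rw [hR, ← Finset.mul_prod_erase univ _ (Finset.mem_univ i₀), Function.update_self]
    congr 1
    exact Finset.prod_congr rfl fun i hi => by
      rw [Function.update_of_ne (Finset.ne_of_mem_erase hi)]
  have P0 : ∏ i, w p (ω i) = p * R := by
    rw [hR, ← Finset.mul_prod_erase univ _ (Finset.mem_univ i₀), hωi]
    rfl
  rw [e1, e2, e3, e4, P0, P false]
  have hwf : w p false = 1 - p := rfl
  rw [hwf]
  have himp : ((m + 1 : ℕ) : ℝ) ≤ lam → ((m : ℕ) : ℝ) ≤ lam := by
    intro h; refine le_trans ?_ h; push_cast; linarith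
  by_cases h2 : ((m + 1 : ℕ) : ℝ) ≤ lam
  · rw [if_pos (himp h2), if_pos h2, if_pos h2, if_pos (himp h2), add_comm]
  · by_cases h1 : ((m : ℕ) : ℝ) ≤ lam
    · rw [if_pos h1, if_neg h2, if_neg h2, if_pos h1, add_zero, zero_add]
      exact mul_le_mul_left hp R
    · rw [if_neg h1, if_neg h2, if_neg h2, if_neg h1]

end WittAux

namespace WittAux

lemma mono (p : ℝ≥0∞) (hp : p ≤ 1 - p) (lam : ℝ) :
    ∀ (N : ℕ) (a b : Fin n → Bool), #(univ.filter fun i => a i ≠ b i) ≤ N →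
      (∀ i, b i = true → a i = true) → S p lam a ≤ S p lam b := by
  intro N
  induction N with
  | zero =>
    intro a b hcard _
    have : a = b := by
      funext i
      by_contra h
      have : i ∈ univ.filter fun i => a i ≠ b i := by simp [h]
      simp [Finset.card_eq_zero.mp (Nat.le_zero.mp hcard)] at this
    rw [this]
  | succ N ih =>
    intro a b hcard hab
    by_cases heq : a = b
    · rw [heq]
    · obtain ⟨i₀, hi₀⟩ : ∃ i, a i ≠ b i := by
        by_contra h
        push_neg at h
        exact heq (funext h)
      have ha : a i₀ = true := by
        cases h1 : a i₀ <;> cases h2 : b i₀ <;> simp_all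
      have hb : b i₀ = false := by
        cases h2 : b i₀
        · rfl
        · exact absurd (ha.trans h2.symm) hi₀
      set a' := Function.update a i₀ false with ha'
      have hstep := step p hp lam a i₀ ha
      refine le_trans hstep (ih a' b ?_ ?_)
      · have hset : (univ.filter fun i => a' i ≠ b i)
            = (univ.filter fun i => a i ≠ b i).erase i₀ := by
          ext i
          rcases eq_or_ne i i₀ with rfl | h
          · simp [ha', hb]
          · simp [ha', Function.update_of_ne h, h]
        rw [hset, Finset.card_erase_of_mem (by simp [hi₀])]
        omega
      · intro i hbi
        rcases eq_or_ne i i₀ with rfl | h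
        · exact absurd hbi (by simp [hb])
        · rw [ha', Function.update_of_ne h]
          exact hab i hbi

lemma ham_comp (u v : Fin n → Bool) (σ : Equiv.Perm (Fin n)) :
    hammingDist (u ∘ σ) (v ∘ σ) = hammingDist u v := by
  rw [ham_eq, ham_eq]
  apply Finset.card_bij' (fun i _ => σ i) (fun j _ => σ.symm j) <;> simp

lemma S_comp_perm (p : ℝ≥0∞) (lam : ℝ) (b : Fin n → Bool) (σ : Equiv.Perm (Fin n)) :
    S p lam (b ∘ σ) = S p lam b := by
  unfold S
  apply Fintype.sum_equiv
    (⟨fun ω => ω ∘ σ.symm, fun ω => ω ∘ σ, fun ω => by funext i; simp, fun ω => by funext i; simp⟩ :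
      (Fin n → Bool) ≃ (Fin n → Bool))
  intro ω
  have h1 : hammingDist (ω ∘ σ.symm) b = hammingDist ω (b ∘ σ) := by
    have := ham_comp (ω ∘ σ.symm) b σ
    rw [show (ω ∘ σ.symm) ∘ σ = ω from funext fun i => by simp] at this
    exact this.symm
  simp only [Equiv.coe_fn_mk, h1]
  congr 1
  exact (Equiv.prod_comp σ.symm fun i => w p (ω i)).symm

end WittAux

end WittAuxSec

open WittAux Finset in
/-- Witt's domination lemma: if `H(x,x*) ≥ H(y,x*)` and `x'`, `y'` arise from `x`, `y`
by standard bit mutation with rate `p ≤ 1/2` (flipping each bit independently with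
probability `p`, modelled by XOR with a product Bernoulli vector), then
`H(y',x*) ⪯ H(x',x*)`, i.e. `Pr[H(x',x*) ≤ λ] ≤ Pr[H(y',x*) ≤ λ]` for all `λ`. -/
theorem stmt_18 (n : ℕ) (xstar x y : Fin n → Bool)
    (hxy : hammingDist y xstar ≤ hammingDist x xstar)
    (p : NNReal) (hp : p ≤ 1 / 2) (hp1 : (p : ℝ≥0∞) ≤ 1)
    (μ : Measure (Fin n → Bool))
    (hμ : μ = Measure.pi fun _ : Fin n => (PMF.bernoulli p (ENNReal.coe_le_one_iff.mp hp1)).toMeasure) :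
    ∀ lam : ℝ,
      μ {ω | (hammingDist (fun i => xor (x i) (ω i)) xstar : ℝ) ≤ lam}
        ≤ μ {ω | (hammingDist (fun i => xor (y i) (ω i)) xstar : ℝ) ≤ lam} := by
  classical
  intro lam
  -- p ≤ 1 - p in ℝ≥0∞
  have haddN : p + p ≤ 1 := by
    calc p + p ≤ 1 / 2 + 1 / 2 := add_le_add hp hp
      _ = 1 := by rw [← NNReal.coe_inj]; push_cast; norm_num
  have hadd : (p : ℝ≥0∞) + p ≤ 1 := by
    rw [← ENNReal.coe_add, ← ENNReal.coe_one]
    exact_mod_cast haddN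
  have hp' : (p : ℝ≥0∞) ≤ 1 - (p : ℝ≥0∞) := ENNReal.le_sub_of_add_le_left ENNReal.coe_ne_top hadd
  -- measure of a set as a sum of weights
  have hsingle : ∀ ω : Fin n → Bool, μ {ω} = ∏ i, w (p : ℝ≥0∞) (ω i) := by
    intro ω
    rw [hμ, ← Set.univ_pi_singleton, Measure.pi_pi]
    refine Finset.prod_congr rfl fun i _ => ?_
    rw [PMF.toMeasure_apply_singleton _ _ (measurableSet_singleton _)]
    cases ω i <;> rfl
  have hmeas : ∀ (P : (Fin n → Bool) → Prop) [DecidablePred P],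
      μ {ω | P ω} = ∑ ω : Fin n → Bool, if P ω then ∏ i, w (p : ℝ≥0∞) (ω i) else 0 := by
    intro P _
    have hset : {ω | P ω} = ⋃ ω ∈ (univ.filter P : Finset (Fin n → Bool)), ({ω} : Set _) := by
      ext z; simp
    rw [hset, measure_biUnion_finset ?_ fun ω _ => measurableSet_singleton ω]
    · rw [Finset.sum_congr rfl fun ω _ => hsingle ω, Finset.sum_filter]
    · intro i _ j _ hij
      simp only [Set.disjoint_singleton]
      exact hij
  -- rewrite hamming distances via xor
  set a : Fin n → Bool := fun i => xor (x i) (xstar i) with hadef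
  set b : Fin n → Bool := fun i => xor (y i) (xstar i) with hbdef
  have hxor : ∀ (u ω : Fin n → Bool),
      hammingDist (fun i => xor (u i) (ω i)) xstar
        = hammingDist ω (fun i => xor (u i) (xstar i)) := by
    intro u ω
    rw [ham_eq, ham_eq]
    congr 1
    apply Finset.filter_congr
    intro i _
    cases u i <;> cases ω i <;> cases xstar i <;> simp
  have hLHS : μ {ω | (hammingDist (fun i => xor (x i) (ω i)) xstar : ℝ) ≤ lam}
      = S (p : ℝ≥0∞) lam a := by
    rw [show {ω : Fin n → Bool | (hammingDist (fun i => xor (x i) (ω i)) xstar : ℝ) ≤ lam}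
        = {ω | (hammingDist ω a : ℝ) ≤ lam} by ext ω; rw [Set.mem_setOf_eq, hxor x ω]; rfl]
    exact hmeas _
  have hRHS : μ {ω | (hammingDist (fun i => xor (y i) (ω i)) xstar : ℝ) ≤ lam}
      = S (p : ℝ≥0∞) lam b := by
    rw [show {ω : Fin n → Bool | (hammingDist (fun i => xor (y i) (ω i)) xstar : ℝ) ≤ lam}
        = {ω | (hammingDist ω b : ℝ) ≤ lam} by ext ω; rw [Set.mem_setOf_eq, hxor y ω]; rfl]
    exact hmeas _
  -- the true-sets and cardinality hypothesis
  set Ta : Finset (Fin n) := univ.filter (fun i => a i = true) with hTa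
  set Tb : Finset (Fin n) := univ.filter (fun i => b i = true) with hTb
  have hcard : #Tb ≤ #Ta := by
    have h1 : #Ta = hammingDist x xstar := by
      rw [ham_eq]; congr 1; apply Finset.filter_congr; intro i _
      cases hxi : x i <;> cases hsi : xstar i <;> simp [hadef, hxi, hsi]
    have h2 : #Tb = hammingDist y xstar := by
      rw [ham_eq]; congr 1; apply Finset.filter_congr; intro i _
      cases hyi : y i <;> cases hsi : xstar i <;> simp [hbdef, hyi, hsi]
    rw [h1, h2]; exact hxy
  -- permutation moving the true-set of b inside that of a
  obtain ⟨T, hTsub, hTcard⟩ := Finset.exists_subset_card_eq hcard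
  let e : {i // i ∈ T} ≃ {i // i ∈ Tb} := Finset.equivOfCardEq hTcard
  set σ : Equiv.Perm (Fin n) := e.extendSubtype with hσdef
  have hσ : ∀ i, (b ∘ σ) i = true → a i = true := by
    intro i hbi
    by_contra hai
    have hiTa : i ∉ Ta := by simp [hTa, hai]
    have hiT : i ∉ T := fun h => hiTa (hTsub h)
    exact e.extendSubtype_not_mem i hiT (Finset.mem_filter.mpr ⟨Finset.mem_univ _, hbi⟩)
  rw [hLHS, hRHS, ← S_comp_perm (p : ℝ≥0∞) lam b σ]
  exact mono (p : ℝ≥0∞) hp' lam _ a (b ∘ σ) le_rfl hσ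
end

section
/- Consider a PSM process with population size $\lambda$ over a finite search space $\Omega$, potential $g: \Omega \to \mathbb{Z}_{\ge 0}$, and parameters $a < b$, $\alpha \ge 1$, $\kappa > 0$, $0 < \delta < 1$, $D \ge \delta$. Suppose: (i) for any population $P$ with all potentials $> a$, every individual $P_i$ with $g(P_i) < b$ has expected reproduction rate $E[R(i,P)] \le \alpha$; (ii) for all $x$ with $a < g(x) < b$, $E[\exp(-\kappa g(\mathrm{mut}(x)))] \le \frac{1-\delta}{\alpha}\exp(-\kappa g(x))$; (iii) for all $x$ with $g(x) \ge b$, $E[\exp(-\kappa g(\mathrm{mut}(x)))] \le D \exp(-\kappa b)$. Define $X_t = \sum_{i=1}^\lambda \exp(-\kappa g(P^{(t)}_i))$. Then for any population $P^{(t-1)}$ with all potentials $> a$, $E[X_t \mid P^{(t-1)}] \le (1-\delta) X_{t-1} + \lambda D \exp(-\kappa b)$. -/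
open scoped BigOperators

/-- One-step drift computation at the heart of the negative drift in populations
theorem: a PSM process over a finite search space `Ω` with population size `lam`,
selection kernel `sel` (an arbitrary distribution on index tuples) and mutation
kernel `mutOp`. With `X_t = ∑ᵢ exp(-κ g(Pᵢ^{(t)}))`, for any parent population `P`
with all potentials `> a`, `E[X_t ∣ P] ≤ (1-δ) X_{t-1} + λ D exp(-κ b)`. -/
theorem stmt_19 {Ω : Type*} [Fintype Ω] (lam : ℕ)
    (sel : (Fin lam → Ω) → PMF (Fin lam → Fin lam))
    (mutOp : Ω → PMF Ω)
    (g : Ω → ℕ) (a b : ℕ) (hab : a < b)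
    (α : ℝ) (hα : 1 ≤ α) (κ : ℝ) (hκ : 0 < κ)
    (δ : ℝ) (hδ0 : 0 < δ) (hδ1 : δ < 1) (D : ℝ) (hD : δ ≤ D)
    -- (i) bounded reproduction rate below potential `b` when no potential is ≤ a
    (hsel : ∀ P : Fin lam → Ω, (∀ i, a < g (P i)) → ∀ i, g (P i) < b →
      (∑' Q : Fin lam → Fin lam,
          ((sel P) Q).toReal * ((Finset.univ.filter fun j => Q j = i).card : ℝ)) ≤ α)
    -- (ii) multiplicative drift of the potential under mutation
    (hmut2 : ∀ x : Ω, a < g x → g x < b →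
      (∑' y : Ω, ((mutOp x) y).toReal * Real.exp (-κ * g y))
        ≤ (1 / α) * (1 - δ) * Real.exp (-κ * g x))
    -- (iii) bounded potential gain from individuals above `b`
    (hmut3 : ∀ x : Ω, b ≤ g x →
      (∑' y : Ω, ((mutOp x) y).toReal * Real.exp (-κ * g y))
        ≤ D * Real.exp (-κ * b))
    (P : Fin lam → Ω) (hP : ∀ i, a < g (P i)) :
    (∑' Q : Fin lam → Fin lam, ((sel P) Q).toReal *
        ∑ i : Fin lam, ∑' y : Ω, ((mutOp (P (Q i))) y).toReal * Real.exp (-κ * g y))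
      ≤ (1 - δ) * (∑ i : Fin lam, Real.exp (-κ * g (P i)))
          + lam * D * Real.exp (-κ * b) := by
  classical
  set M : Ω → ℝ := fun x => ∑' y : Ω, ((mutOp x) y).toReal * Real.exp (-κ * g y) with hMdef
  have hM0 : ∀ x, 0 ≤ M x := fun x =>
    tsum_nonneg fun y => mul_nonneg ENNReal.toReal_nonneg (Real.exp_pos _).le
  set w : (Fin lam → Fin lam) → ℝ := fun Q => ((sel P) Q).toReal with hwdef
  have hw0 : ∀ Q, 0 ≤ w Q := fun Q => ENNReal.toReal_nonneg
  have hwsum : ∑ Q : Fin lam → Fin lam, w Q = 1 := by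
    have h1 : ∑' Q : Fin lam → Fin lam, (sel P) Q = 1 := (sel P).tsum_coe
    rw [tsum_fintype] at h1
    have h2 : ∀ Q : Fin lam → Fin lam, (sel P) Q ≠ ⊤ := fun Q =>
      (PMF.apply_lt_top (sel P) Q).ne
    have := ENNReal.toReal_sum (s := Finset.univ) (f := fun Q : Fin lam → Fin lam => (sel P) Q)
      (fun Q _ => h2 Q)
    rw [h1] at this
    simpa [hwdef] using this.symm
  set c : Fin lam → (Fin lam → Fin lam) → ℝ :=
    fun j Q => ((Finset.univ.filter fun i => Q i = j).card : ℝ) with hcdef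
  have hc0 : ∀ j Q, 0 ≤ c j Q := fun j Q => Nat.cast_nonneg _
  have hcsum : ∀ Q : Fin lam → Fin lam, ∑ j, c j Q = lam := by
    intro Q
    have : ∑ j : Fin lam, ((Finset.univ.filter fun i => Q i = j).card : ℝ)
        = ((Finset.univ : Finset (Fin lam)).card : ℝ) := by
      rw [← Nat.cast_sum]
      congr 1
      exact (Finset.card_eq_sum_card_fiberwise (fun i _ => Finset.mem_univ (Q i))).symm
    simpa [hcdef] using this
  have hfiber : ∀ Q : Fin lam → Fin lam, ∑ i, M (P (Q i)) = ∑ j, c j Q * M (P j) := by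
    intro Q
    rw [← Finset.sum_fiberwise Finset.univ Q (fun i => M (P (Q i)))]
    refine Finset.sum_congr rfl fun j _ => ?_
    rw [Finset.sum_congr rfl (fun i hi => ?_), Finset.sum_const, nsmul_eq_mul]
    exact (Finset.mem_filter.mp hi).2 ▸ rfl
  set E : Fin lam → ℝ := fun j => ∑ Q : Fin lam → Fin lam, w Q * c j Q with hEdef
  have hE0 : ∀ j, 0 ≤ E j := fun j =>
    Finset.sum_nonneg fun Q _ => mul_nonneg (hw0 Q) (hc0 j Q)
  have hEsum : ∑ j, E j = (lam : ℝ) := by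
    rw [hEdef]
    rw [Finset.sum_comm]
    calc ∑ Q : Fin lam → Fin lam, ∑ j, w Q * c j Q
        = ∑ Q : Fin lam → Fin lam, w Q * lam := by
          refine Finset.sum_congr rfl fun Q _ => ?_
          rw [← Finset.mul_sum, hcsum]
      _ = (lam : ℝ) := by rw [← Finset.sum_mul, hwsum, one_mul]
  have hEα : ∀ j, g (P j) < b → E j ≤ α := by
    intro j hj
    have := hsel P hP j hj
    rwa [tsum_fintype] at this
  -- rewrite LHS
  have lhs_eq : (∑' Q : Fin lam → Fin lam, ((sel P) Q).toReal *
        ∑ i : Fin lam, ∑' y : Ω, ((mutOp (P (Q i))) y).toReal * Real.exp (-κ * g y))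
      = ∑ j, E j * M (P j) := by
    rw [tsum_fintype]
    calc ∑ Q : Fin lam → Fin lam, w Q * ∑ i, M (P (Q i))
        = ∑ Q : Fin lam → Fin lam, ∑ j, w Q * (c j Q * M (P j)) := by
          refine Finset.sum_congr rfl fun Q _ => ?_
          rw [hfiber Q, Finset.mul_sum]
      _ = ∑ j, ∑ Q : Fin lam → Fin lam, w Q * (c j Q * M (P j)) := Finset.sum_comm
      _ = ∑ j, E j * M (P j) := by
          refine Finset.sum_congr rfl fun j _ => ?_
          rw [hEdef, Finset.sum_mul]
          exact Finset.sum_congr rfl fun Q _ => by ring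
  rw [lhs_eq]
  -- split into low and high potential parents
  have hαpos : (0 : ℝ) < α := lt_of_lt_of_le one_pos hα
  have hDexp : 0 ≤ D * Real.exp (-κ * b) :=
    mul_nonneg (le_trans hδ0.le hD) (Real.exp_pos _).le
  set S : Finset (Fin lam) := Finset.univ.filter fun j => g (P j) < b with hSdef
  rw [← Finset.sum_filter_add_sum_filter_not Finset.univ (fun j => g (P j) < b)
    (fun j => E j * M (P j))]
  have hlow : ∑ j ∈ S, E j * M (P j)
      ≤ (1 - δ) * ∑ i, Real.exp (-κ * g (P i)) := by
    calc ∑ j ∈ S, E j * M (P j)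
        ≤ ∑ j ∈ S, (1 - δ) * Real.exp (-κ * g (P j)) := by
          refine Finset.sum_le_sum fun j hj => ?_
          have hjb : g (P j) < b := (Finset.mem_filter.mp hj).2
          have hMle : M (P j) ≤ (1 / α) * (1 - δ) * Real.exp (-κ * g (P j)) :=
            hmut2 (P j) (hP j) hjb
          have hbd0 : 0 ≤ (1 / α) * (1 - δ) * Real.exp (-κ * g (P j)) :=
            mul_nonneg (mul_nonneg (by positivity) (by linarith)) (Real.exp_pos _).le
          calc E j * M (P j) ≤ E j * ((1 / α) * (1 - δ) * Real.exp (-κ * g (P j))) :=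
                mul_le_mul_of_nonneg_left hMle (hE0 j)
            _ ≤ α * ((1 / α) * (1 - δ) * Real.exp (-κ * g (P j))) :=
                mul_le_mul_of_nonneg_right (hEα j hjb) hbd0
            _ = (1 - δ) * Real.exp (-κ * g (P j)) := by
                field_simp
      _ ≤ (1 - δ) * ∑ i, Real.exp (-κ * g (P i)) := by
          rw [← Finset.mul_sum]
          refine mul_le_mul_of_nonneg_left ?_ (by linarith)
          exact Finset.sum_le_sum_of_subset_of_nonneg (Finset.filter_subset _ _)
            (fun i _ _ => (Real.exp_pos _).le)
  have hhigh : ∑ j ∈ Finset.univ.filter (fun j => ¬ g (P j) < b), E j * M (P j)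
      ≤ lam * D * Real.exp (-κ * b) := by
    calc ∑ j ∈ Finset.univ.filter (fun j => ¬ g (P j) < b), E j * M (P j)
        ≤ ∑ j ∈ Finset.univ.filter (fun j => ¬ g (P j) < b),
            E j * (D * Real.exp (-κ * b)) := by
          refine Finset.sum_le_sum fun j hj => ?_
          have hjb : b ≤ g (P j) := le_of_not_gt (Finset.mem_filter.mp hj).2
          exact mul_le_mul_of_nonneg_left (hmut3 (P j) hjb) (hE0 j)
      _ = (∑ j ∈ Finset.univ.filter (fun j => ¬ g (P j) < b), E j) * (D * Real.exp (-κ * b)) :=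
          (Finset.sum_mul _ _ _).symm
      _ ≤ (lam : ℝ) * (D * Real.exp (-κ * b)) := by
          refine mul_le_mul_of_nonneg_right ?_ hDexp
          rw [← hEsum]
          exact Finset.sum_le_sum_of_subset_of_nonneg (Finset.filter_subset _ _)
            (fun i _ _ => hE0 i)
      _ = lam * D * Real.exp (-κ * b) := by ring
  exact add_le_add hlow hhigh
end
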